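/- (Lemma 6.1, curvature lower bound) Suppose G carries an orientation such that K(v) > 0 for every v ∈ V. Then the isoperimetric constant satisfies α(G) ≥ inf_{v ∈ V} K(v). -/

import Mathlib

open scoped Classical ENNReal
open MeasureTheory

noncomputable section

/-- A real function on `[0, L]` which is continuous and piecewise continuously
differentiable: there is a finite partition `0 = x 0 < x 1 < ... < x n = L` such that
on each closed piece the function has a continuous derivative. -/
def PiecewiseC1 (f : ℝ → ℝ) (L : ℝ) : Prop :=
  ContinuousOn f (Set.Icc 0 L) ∧
  ∃ (n : ℕ) (x : Fin (n + 1) → ℝ), x 0 = 0 ∧ x (Fin.last n) = L ∧ StrictMono x ∧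
    ∀ i : Fin n, ∃ g : ℝ → ℝ,
      ContinuousOn g (Set.Icc (x i.castSucc) (x i.succ)) ∧
      ∀ t ∈ Set.Icc (x i.castSucc) (x i.succ),
        HasDerivWithinAt f (g t) (Set.Icc (x i.castSucc) (x i.succ)) t

/-- The underlying (unoriented) simple graph of a set of edges `E` with endpoint
map `ends : E → V × V`. -/
def graphOf {V E : Type} (ends : E → V × V) : SimpleGraph V :=
  SimpleGraph.fromRel fun u v => ∃ e, ends e = (u, v)

/-- A metric graph: a connected, locally finite, simple combinatorial graph with
countably infinite vertex and edge sets, each edge having a finite positive length.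
Each edge carries an (auxiliary) orientation given by `ends`. -/
structure MetricGraph : Type 1 where
  V : Type
  E : Type
  countV : Countable V
  infV : Infinite V
  countE : Countable E
  infE : Infinite E
  ends : E → V × V
  len : E → ℝ
  len_pos : ∀ e, 0 < len e
  no_loops : ∀ e, (ends e).1 ≠ (ends e).2
  no_multi : Function.Injective fun e => Sym2.mk (ends e)
  locfin : ∀ v, {e | (ends e).1 = v ∨ (ends e).2 = v}.Finite
  conn : (graphOf ends).Connected

namespace MetricGraph

/-- The underlying simple graph. -/
def graph (Γ : MetricGraph) : SimpleGraph Γ.V := graphOf Γ.ends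

/-- The star of a vertex: the set of edges incident to it. -/
def star (Γ : MetricGraph) (v : Γ.V) : Set Γ.E :=
  {e | (Γ.ends e).1 = v ∨ (Γ.ends e).2 = v}

/-- Combinatorial degree of a vertex. -/
def degree (Γ : MetricGraph) (v : Γ.V) : ℕ := (Γ.locfin v).toFinset.card

/-- The vertices of a (finite) subgraph given by a finite set of edges. -/
def vertsOf (Γ : MetricGraph) (F : Finset Γ.E) : Finset Γ.V :=
  F.image (fun e => (Γ.ends e).1) ∪ F.image fun e => (Γ.ends e).2

/-- The degree of a vertex inside the subgraph given by the edge set `F`. -/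
def degIn (Γ : MetricGraph) (F : Finset Γ.E) (v : Γ.V) : ℕ :=
  (F.filter fun e => (Γ.ends e).1 = v ∨ (Γ.ends e).2 = v).card

/-- Connectedness of the subgraph spanned by the edge set `F`. -/
def SubConn (Γ : MetricGraph) (F : Finset Γ.E) : Prop :=
  ((SimpleGraph.fromRel fun u v => ∃ e ∈ F, Γ.ends e = (u, v)).induce
    (↑(Γ.vertsOf F) : Set Γ.V)).Connected

/-- A finite connected subgraph (with at least one edge), given by its edge set. -/
def IsFinSubgraph (Γ : MetricGraph) (F : Finset Γ.E) : Prop :=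
  F.Nonempty ∧ Γ.SubConn F

/-- The boundary of a finite subgraph with respect to `Γ`: the vertices whose degree
in the subgraph is strictly smaller than the degree in `Γ`. -/
def bdry (Γ : MetricGraph) (F : Finset Γ.E) : Finset Γ.V :=
  (Γ.vertsOf F).filter fun v => Γ.degIn F v < Γ.degree v

/-- `deg (∂_G G̃)`. -/
def degBdry (Γ : MetricGraph) (F : Finset Γ.E) : ℝ :=
  ∑ v ∈ Γ.bdry F, (Γ.degIn F v : ℝ)

/-- The total length (Lebesgue measure) of a finite subgraph. -/
def mes (Γ : MetricGraph) (F : Finset Γ.E) : ℝ := ∑ e ∈ F, Γ.len e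

/-- The isoperimetric (Cheeger) constant of a metric graph. -/
def alpha (Γ : MetricGraph) : ℝ :=
  sInf {r : ℝ | ∃ F : Finset Γ.E, Γ.IsFinSubgraph F ∧ r = Γ.degBdry F / Γ.mes F}

/-- The isoperimetric constant at infinity, as an element of `[0,∞]`. -/
def alphaEssEnn (Γ : MetricGraph) : ℝ≥0∞ :=
  ⨆ W : Finset Γ.E, ⨅ (F : Finset Γ.E) (_ : Γ.IsFinSubgraph F ∧ Disjoint F W),
    ENNReal.ofReal (Γ.degBdry F / Γ.mes F)

/-- The vertex weight `m(v) = Σ_{e ∈ E_v} |e|`. -/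
def mweight (Γ : MetricGraph) (v : Γ.V) : ℝ :=
  ∑ e ∈ (Γ.locfin v).toFinset, Γ.len e

/-- The set of boundary edges of a vertex set: edges with exactly one endpoint in `X`. -/
def Eb (Γ : MetricGraph) (X : Set Γ.V) : Set Γ.E :=
  {e | Xor' ((Γ.ends e).1 ∈ X) ((Γ.ends e).2 ∈ X)}

/-- The discrete isoperimetric constant of a vertex set `U`. -/
def alphaD (Γ : MetricGraph) (U : Set Γ.V) : ℝ :=
  sInf {r : ℝ | ∃ X : Finset Γ.V, ↑X ⊆ U ∧ X.Nonempty ∧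
    r = ((Γ.Eb ↑X).ncard : ℝ) / ∑ v ∈ X, Γ.mweight v}

/-- The discrete isoperimetric constant at infinity, as an element of `[0,∞]`. -/
def alphaDEssEnn (Γ : MetricGraph) : ℝ≥0∞ :=
  ⨆ X : Finset Γ.V, ENNReal.ofReal (Γ.alphaD (↑X : Set Γ.V)ᶜ)

/-- The combinatorial isoperimetric constant. -/
def alphaComb (Γ : MetricGraph) : ℝ :=
  sInf {r : ℝ | ∃ X : Finset Γ.V, X.Nonempty ∧
    r = ((Γ.Eb ↑X).ncard : ℝ) / ∑ v ∈ X, (Γ.degree v : ℝ)}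

/-- `ℓ*(G) = sup of edge lengths`. -/
def ellSup (Γ : MetricGraph) : ℝ := sSup (Set.range Γ.len)

/-- `ℓ_*(G) = inf of edge lengths`. -/
def ellInf (Γ : MetricGraph) : ℝ := sInf (Set.range Γ.len)

/-- `ℓ*(G)` as an element of `[0,∞]`. -/
def ellSupEnn (Γ : MetricGraph) : ℝ≥0∞ := ⨆ e : Γ.E, ENNReal.ofReal (Γ.len e)

/-- `ℓ*_ess(G) = inf_F sup_{e ∉ F} |e|` as an element of `[0,∞]`. -/
def ellSupEssEnn (Γ : MetricGraph) : ℝ≥0∞ :=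
  ⨅ W : Finset Γ.E, ⨆ e : {e : Γ.E // e ∉ W}, ENNReal.ofReal (Γ.len (e : Γ.E))

/-- Outgoing edges at a vertex (for the fixed orientation). -/
def plusE (Γ : MetricGraph) (v : Γ.V) : Set Γ.E := {e | (Γ.ends e).1 = v}

/-- Incoming edges at a vertex (for the fixed orientation). -/
def minusE (Γ : MetricGraph) (v : Γ.V) : Set Γ.E := {e | (Γ.ends e).2 = v}

/-- The curvature `K(v) = ((#E_v⁺ − #E_v⁻)/#E_v⁺) · inf_{e ∈ E_v⁺} 1/|e|`. -/
def Kcurv (Γ : MetricGraph) (v : Γ.V) : ℝ :=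
  (((Γ.plusE v).ncard : ℝ) - ((Γ.minusE v).ncard : ℝ)) / ((Γ.plusE v).ncard : ℝ) *
    sInf ((fun e => 1 / Γ.len e) '' Γ.plusE v)

/-- The combinatorial curvature `K_comb(v) = 1 − #E_v⁻/#E_v⁺`. -/
def Kcomb (Γ : MetricGraph) (v : Γ.V) : ℝ :=
  1 - ((Γ.minusE v).ncard : ℝ) / ((Γ.plusE v).ncard : ℝ)

/-- `liminf_{v ∈ V} K(v) = sup over finite W of inf_{v ∉ W} K(v)`, in `[0,∞]`. -/
def KcurvEssEnn (Γ : MetricGraph) : ℝ≥0∞ :=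
  ⨆ W : Finset Γ.V, ⨅ v : {v : Γ.V // v ∉ W}, ENNReal.ofReal (Γ.Kcurv (v : Γ.V))

/-- `liminf_{v ∈ V} K_comb(v) = sup over finite W of inf_{v ∉ W} K_comb(v)`. -/
def KcombLiminf (Γ : MetricGraph) : ℝ :=
  sSup (Set.range fun W : Finset Γ.V => sInf (Γ.Kcomb '' (↑W : Set Γ.V)ᶜ))

/-- The value of an edgewise function at an endpoint of an edge. -/
def endVal (Γ : MetricGraph) (f : Γ.E → ℝ → ℝ) (e : Γ.E) (v : Γ.V) : ℝ :=
  if (Γ.ends e).1 = v then f e 0 else f e (Γ.len e)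

/-- A test function on the metric graph `Γ`: a family of continuous, piecewise `C¹`
functions on the edges, matching at the vertices, vanishing on all but finitely
many edges. -/
structure TestFun (Γ : MetricGraph) where
  f : Γ.E → ℝ → ℝ
  piecewise : ∀ e, PiecewiseC1 (f e) (Γ.len e)
  vertexCont : ∀ e e' : Γ.E, ∀ v : Γ.V, e ∈ Γ.star v → e' ∈ Γ.star v →
    Γ.endVal f e v = Γ.endVal f e' v
  finSupp : {e : Γ.E | ∃ x ∈ Set.Icc 0 (Γ.len e), f e x ≠ 0}.Finite

/-- `‖f‖² = Σ_e ∫₀^{|e|} f_e(x)² dx`. -/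
def TestFun.normSq {Γ : MetricGraph} (φ : TestFun Γ) : ℝ :=
  ∑ᶠ e : Γ.E, ∫ x in (0:ℝ)..Γ.len e, (φ.f e x) ^ 2

/-- `‖f′‖² = Σ_e ∫₀^{|e|} f_e′(x)² dx`. -/
def TestFun.energySq {Γ : MetricGraph} (φ : TestFun Γ) : ℝ :=
  ∑ᶠ e : Γ.E, ∫ x in (0:ℝ)..Γ.len e, (deriv (φ.f e) x) ^ 2

/-- A test function is nonzero if it does not vanish identically on the graph. -/
def TestFun.Nonzero {Γ : MetricGraph} (φ : TestFun Γ) : Prop :=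
  ∃ e : Γ.E, ∃ x ∈ Set.Icc 0 (Γ.len e), φ.f e x ≠ 0

/-- The bottom of the spectrum of the Kirchhoff Laplacian, via the variational
(Rayleigh quotient) characterization. -/
def lambda0 (Γ : MetricGraph) : ℝ :=
  sInf {r : ℝ | ∃ φ : TestFun Γ, φ.Nonzero ∧ r = φ.energySq / φ.normSq}

end MetricGraph

/-- A weighted graph `(V, m, b)`: a connected, locally finite, simple combinatorial
graph with countably infinite vertex and edge sets, an edge weight `b` and a vertex
weight `m`. -/
structure WeightedGraph : Type 1 where
  V : Type
  E : Type
  countV : Countable V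
  infV : Infinite V
  countE : Countable E
  infE : Infinite E
  ends : E → V × V
  no_loops : ∀ e, (ends e).1 ≠ (ends e).2
  no_multi : Function.Injective fun e => Sym2.mk (ends e)
  locfin : ∀ v, {e | (ends e).1 = v ∨ (ends e).2 = v}.Finite
  conn : (graphOf ends).Connected
  b : E → ℝ
  b_pos : ∀ e, 0 < b e
  m : V → ℝ
  m_pos : ∀ v, 0 < m v

namespace WeightedGraph

/-- An edge weight `d` is intrinsic if `Σ_{e ∈ E_v} d(e)² b(e) ≤ m(v)` for all `v`. -/
def Intrinsic (Γ : WeightedGraph) (d : Γ.E → ℝ) : Prop :=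
  ∀ v, ∑ e ∈ (Γ.locfin v).toFinset, d e ^ 2 * Γ.b e ≤ Γ.m v

/-- The boundary edges of a vertex set: edges with exactly one endpoint in `X`. -/
def Eb (Γ : WeightedGraph) (X : Set Γ.V) : Set Γ.E :=
  {e | Xor' ((Γ.ends e).1 ∈ X) ((Γ.ends e).2 ∈ X)}

/-- The discrete isoperimetric constant `α_d(U)` with respect to the weight `d`. -/
def alphaD (Γ : WeightedGraph) (d : Γ.E → ℝ) (U : Set Γ.V) : ℝ :=
  sInf {r : ℝ | ∃ X : Finset Γ.V, ↑X ⊆ U ∧ X.Nonempty ∧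
    r = (∑ᶠ e ∈ Γ.Eb ↑X, d e * Γ.b e) / ∑ v ∈ X, Γ.m v}

/-- The discrete isoperimetric constant at infinity, in `[0,∞]`. -/
def alphaDEssEnn (Γ : WeightedGraph) (d : Γ.E → ℝ) : ℝ≥0∞ :=
  ⨆ X : Finset Γ.V, ENNReal.ofReal (Γ.alphaD d (↑X : Set Γ.V)ᶜ)

/-- The energy form `Q(u) = Σ_e b(e) (u(e_i) − u(e_0))²`. -/
def Q (Γ : WeightedGraph) (u : Γ.V → ℝ) : ℝ :=
  ∑ᶠ e : Γ.E, Γ.b e * (u (Γ.ends e).2 - u (Γ.ends e).1) ^ 2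

/-- The squared norm `Σ_v m(v) u(v)²`. -/
def normSqD (Γ : WeightedGraph) (u : Γ.V → ℝ) : ℝ :=
  ∑ᶠ v : Γ.V, Γ.m v * u v ^ 2

/-- The bottom of the spectrum of the Friedrichs extension of the weighted Laplacian,
via the variational characterization over finitely supported functions. -/
def lambda0 (Γ : WeightedGraph) : ℝ :=
  sInf {r : ℝ | ∃ u : Γ.V → ℝ, (Function.support u).Finite ∧ u ≠ 0 ∧
    r = Γ.Q u / Γ.normSqD u}

/-- The bottom of the essential spectrum of the Friedrichs extension, via Glazman's
decomposition principle, in `[0,∞]`. -/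
def lambda0EssEnn (Γ : WeightedGraph) : ℝ≥0∞ :=
  ⨆ X : Finset Γ.V, ⨅ (u : Γ.V → ℝ)
    (_ : (Function.support u).Finite ∧ u ≠ 0 ∧ ∀ v ∈ X, u v = 0),
      ENNReal.ofReal (Γ.Q u / Γ.normSqD u)

end WeightedGraph

end

section Aux

open Finset

/-- Key inequality: for every nonempty finite edge set `F`,
`κ · mes F ≤ degBdry F` where `κ = inf K`. -/
lemma MetricGraph.key_ineq (Γ : MetricGraph)
    (h : ∀ v : Γ.V, (Γ.plusE v).Nonempty ∧ 0 < Γ.Kcurv v)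
    (F : Finset Γ.E) (hF : F.Nonempty) :
    sInf (Set.range Γ.Kcurv) * Γ.mes F ≤ Γ.degBdry F := by
  set κ := sInf (Set.range Γ.Kcurv) with hκdef
  have hdeg0 : (0:ℝ) ≤ Γ.degBdry F := Finset.sum_nonneg fun v _ => Nat.cast_nonneg _
  have hmes0 : (0:ℝ) ≤ Γ.mes F := Finset.sum_nonneg fun e _ => (Γ.len_pos e).le
  rcases le_or_gt κ 0 with hk | hk
  · nlinarith
  -- notation
  set V' := Γ.vertsOf F with hV'
  set pf : Γ.V → ℕ := fun v => (F.filter fun e => (Γ.ends e).1 = v).card with hpf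
  set mf : Γ.V → ℕ := fun v => (F.filter fun e => (Γ.ends e).2 = v).card with hmf
  set c : Γ.V → ℝ := fun v =>
    (((Γ.plusE v).ncard : ℝ) - ((Γ.minusE v).ncard : ℝ)) / ((Γ.plusE v).ncard : ℝ) with hc
  have hpfin : ∀ v, (Γ.plusE v).Finite := fun v =>
    (Γ.locfin v).subset fun e he => Or.inl he
  have hppos : ∀ v, (0:ℝ) < ((Γ.plusE v).ncard : ℝ) := by
    intro v
    exact_mod_cast (Set.ncard_pos (hpfin v)).2 (h v).1
  -- curvature facts
  have hIfacts : ∀ v, 0 < c v ∧ ∀ e ∈ Γ.plusE v, Γ.Kcurv v * Γ.len e ≤ c v := by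
    intro v
    set I := sInf ((fun e => 1 / Γ.len e) '' Γ.plusE v) with hI
    have hfin : ((fun e => 1 / Γ.len e) '' Γ.plusE v).Finite := (hpfin v).image _
    have hne : ((fun e => 1 / Γ.len e) '' Γ.plusE v).Nonempty := (h v).1.image _
    have hImem : I ∈ (fun e => 1 / Γ.len e) '' Γ.plusE v := hne.csInf_mem hfin
    obtain ⟨e', _, hIe⟩ := hImem
    have hIpos : 0 < I := by
      rw [← hIe]; exact one_div_pos.2 (Γ.len_pos e')
    have hKv : 0 < c v * I := (h v).2
    have hcpos : 0 < c v := by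
      by_contra hcc
      push_neg at hcc
      nlinarith
    refine ⟨hcpos, fun e he => ?_⟩
    have hle : I ≤ 1 / Γ.len e := csInf_le hfin.bddBelow ⟨e, he, rfl⟩
    have hlp := Γ.len_pos e
    have h1 : I * Γ.len e ≤ 1 := by
      have := mul_le_mul_of_nonneg_right hle hlp.le
      rwa [one_div, inv_mul_cancel₀ hlp.ne'] at this
    have : Γ.Kcurv v * Γ.len e = c v * (I * Γ.len e) := by
      show c v * I * Γ.len e = _
      ring
    rw [this]
    nlinarith
  have hκle : ∀ v, κ ≤ Γ.Kcurv v := fun v =>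
    csInf_le ⟨0, fun r ⟨v', hv'⟩ => hv' ▸ (h v').2.le⟩ ⟨v, rfl⟩
  -- fiberwise decomposition of mes
  have hmaps1 : ∀ e ∈ F, (Γ.ends e).1 ∈ V' := fun e he =>
    Finset.mem_union_left _ (Finset.mem_image_of_mem _ he)
  have hmaps2 : ∀ e ∈ F, (Γ.ends e).2 ∈ V' := fun e he =>
    Finset.mem_union_right _ (Finset.mem_image_of_mem _ he)
  have hmes : Γ.mes F = ∑ v ∈ V', ∑ e ∈ F.filter fun e => (Γ.ends e).1 = v, Γ.len e :=
    (Finset.sum_fiberwise_of_maps_to hmaps1 _).symm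
  have hstep1 : κ * Γ.mes F ≤ ∑ v ∈ V', (pf v : ℝ) * c v := by
    rw [hmes, Finset.mul_sum]
    refine Finset.sum_le_sum fun v _ => ?_
    rw [Finset.mul_sum]
    have hedge : ∀ e ∈ F.filter fun e => (Γ.ends e).1 = v, κ * Γ.len e ≤ c v := by
      intro e he
      have hev : e ∈ Γ.plusE v := (Finset.mem_filter.1 he).2
      have h1 : κ * Γ.len e ≤ Γ.Kcurv v * Γ.len e :=
        mul_le_mul_of_nonneg_right (hκle v) (Γ.len_pos e).le
      exact h1.trans ((hIfacts v).2 e hev)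
    calc ∑ e ∈ F.filter fun e => (Γ.ends e).1 = v, κ * Γ.len e
        ≤ (F.filter fun e => (Γ.ends e).1 = v).card • c v :=
          Finset.sum_le_card_nsmul _ _ _ hedge
      _ = (pf v : ℝ) * c v := by rw [nsmul_eq_mul]
  -- counting sums
  have hsum_pf : ∑ v ∈ V', (pf v : ℝ) = (F.card : ℝ) := by
    rw [Finset.card_eq_sum_card_fiberwise hmaps1]
    push_cast
    rfl
  have hsum_mf : ∑ v ∈ V', (mf v : ℝ) = (F.card : ℝ) := by
    rw [Finset.card_eq_sum_card_fiberwise hmaps2]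
    push_cast
    rfl
  -- interior vertices
  have hinterior : ∀ v ∈ V'.filter fun v => ¬ Γ.degIn F v < Γ.degree v,
      (pf v : ℝ) * c v = (pf v : ℝ) - (mf v : ℝ) := by
    intro v hv
    rw [Finset.mem_filter] at hv
    have hge : Γ.degree v ≤ Γ.degIn F v := not_lt.1 hv.2
    have heq : (F.filter fun e => (Γ.ends e).1 = v ∨ (Γ.ends e).2 = v)
        = (Γ.locfin v).toFinset := by
      apply Finset.eq_of_subset_of_card_le
      · intro e he
        rw [Set.Finite.mem_toFinset]
        exact (Finset.mem_filter.1 he).2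
      · exact hge
    have hpfv : (pf v : ℝ) = ((Γ.plusE v).ncard : ℝ) := by
      have hset : Γ.plusE v = ↑(F.filter fun e => (Γ.ends e).1 = v) := by
        ext e
        simp only [MetricGraph.plusE, Set.mem_setOf_eq, Finset.coe_filter,
          Set.mem_setOf_eq]
        constructor
        · intro he
          refine ⟨?_, he⟩
          have : e ∈ (Γ.locfin v).toFinset := by
            rw [Set.Finite.mem_toFinset]; exact Or.inl he
          rw [← heq] at this
          exact (Finset.mem_filter.1 this).1
        · exact fun he => he.2
      rw [hset, Set.ncard_coe_finset]
    have hmfv : (mf v : ℝ) = ((Γ.minusE v).ncard : ℝ) := by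
      have hset : Γ.minusE v = ↑(F.filter fun e => (Γ.ends e).2 = v) := by
        ext e
        simp only [MetricGraph.minusE, Set.mem_setOf_eq, Finset.coe_filter,
          Set.mem_setOf_eq]
        constructor
        · intro he
          refine ⟨?_, he⟩
          have : e ∈ (Γ.locfin v).toFinset := by
            rw [Set.Finite.mem_toFinset]; exact Or.inr he
          rw [← heq] at this
          exact (Finset.mem_filter.1 this).1
        · exact fun he => he.2
      rw [hset, Set.ncard_coe_finset]
    rw [hc]
    rw [hpfv, hmfv]
    show ((Γ.plusE v).ncard : ℝ) *
        ((((Γ.plusE v).ncard : ℝ) - ((Γ.minusE v).ncard : ℝ)) / ((Γ.plusE v).ncard : ℝ)) = _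
    rw [mul_comm]
    exact div_mul_cancel₀ _ (hppos v).ne'
  -- boundary estimates
  have hBd : Γ.degBdry F = ∑ v ∈ V'.filter fun v => Γ.degIn F v < Γ.degree v,
      (Γ.degIn F v : ℝ) := rfl
  have hmf_le : ∀ v, (mf v : ℝ) ≤ (Γ.degIn F v : ℝ) := by
    intro v
    have : mf v ≤ Γ.degIn F v := by
      apply Finset.card_le_card
      intro e he
      rw [Finset.mem_filter] at he ⊢
      exact ⟨he.1, Or.inr he.2⟩
    exact_mod_cast this
  have hpf_le : ∀ v, (pf v : ℝ) ≤ (Γ.degIn F v : ℝ) := by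
    intro v
    have : pf v ≤ Γ.degIn F v := by
      apply Finset.card_le_card
      intro e he
      rw [Finset.mem_filter] at he ⊢
      exact ⟨he.1, Or.inl he.2⟩
    exact_mod_cast this
  have hc_le_one : ∀ v, c v ≤ 1 := by
    intro v
    rw [hc]
    rw [div_le_one (hppos v)]
    have : (0:ℝ) ≤ ((Γ.minusE v).ncard : ℝ) := Nat.cast_nonneg _
    linarith
  -- combine
  set Bd := V'.filter fun v => Γ.degIn F v < Γ.degree v with hBdDef
  set In := V'.filter fun v => ¬ Γ.degIn F v < Γ.degree v with hInDef
  have hsplit : ∀ g : Γ.V → ℝ, ∑ v ∈ Bd, g v + ∑ v ∈ In, g v = ∑ v ∈ V', g v :=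
    fun g => Finset.sum_filter_add_sum_filter_not V' _ g
  have e1 : ∑ v ∈ In, (pf v : ℝ) * c v = ∑ v ∈ In, ((pf v : ℝ) - (mf v : ℝ)) :=
    Finset.sum_congr rfl hinterior
  have e2 : ∑ v ∈ Bd, ((pf v : ℝ) - (mf v : ℝ))
      + ∑ v ∈ In, ((pf v : ℝ) - (mf v : ℝ)) = 0 := by
    rw [hsplit, Finset.sum_sub_distrib, hsum_pf, hsum_mf]
    ring
  have e3 : ∑ v ∈ Bd, (pf v : ℝ) * c v ≤ ∑ v ∈ Bd, (pf v : ℝ) := by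
    refine Finset.sum_le_sum fun v _ => ?_
    have h0 : 0 ≤ c v := ((hIfacts v).1).le
    have h1 : c v ≤ 1 := hc_le_one v
    nlinarith [Nat.cast_nonneg (α := ℝ) (pf v)]
  have e4 : ∑ v ∈ Bd, (mf v : ℝ) ≤ Γ.degBdry F := by
    rw [hBd]
    exact Finset.sum_le_sum fun v _ => hmf_le v
  have e5 : ∑ v ∈ Bd, ((pf v : ℝ) - (mf v : ℝ))
      = ∑ v ∈ Bd, (pf v : ℝ) - ∑ v ∈ Bd, (mf v : ℝ) := Finset.sum_sub_distrib _ _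
  have e0 : ∑ v ∈ Bd, (pf v : ℝ) * c v + ∑ v ∈ In, (pf v : ℝ) * c v
      = ∑ v ∈ V', (pf v : ℝ) * c v := hsplit _
  linarith
end Aux

/-- **Lemma 6.1 (curvature lower bound).** If `K(v) > 0` for every vertex `v`
(in particular `E_v⁺ ≠ ∅`), then `α(G) ≥ inf_v K(v)`. -/
theorem alpha_ge_inf_curvature (Γ : MetricGraph)
    (h : ∀ v : Γ.V, (Γ.plusE v).Nonempty ∧ 0 < Γ.Kcurv v) :
    sInf (Set.range Γ.Kcurv) ≤ Γ.alpha := by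
  -- the set defining alpha is nonempty: take a single edge
  haveI := Γ.infE
  obtain ⟨e₀⟩ : Nonempty Γ.E := inferInstance
  have hab : (Γ.ends e₀).1 ≠ (Γ.ends e₀).2 := Γ.no_loops e₀
  have ha : (Γ.ends e₀).1 ∈ Γ.vertsOf {e₀} :=
    Finset.mem_union_left _ (Finset.mem_image_of_mem _ (Finset.mem_singleton_self _))
  have hb : (Γ.ends e₀).2 ∈ Γ.vertsOf {e₀} :=
    Finset.mem_union_right _ (Finset.mem_image_of_mem _ (Finset.mem_singleton_self _))
  have hmem : ∀ v ∈ Γ.vertsOf {e₀}, v = (Γ.ends e₀).1 ∨ v = (Γ.ends e₀).2 := by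
    intro v hv
    simp only [MetricGraph.vertsOf, Finset.mem_union, Finset.mem_image,
      Finset.mem_singleton] at hv
    rcases hv with ⟨e, rfl, rfl⟩ | ⟨e, rfl, rfl⟩
    · exact Or.inl rfl
    · exact Or.inr rfl
  have hconn : Γ.SubConn {e₀} := by
    rw [MetricGraph.SubConn]
    have hadj : ((SimpleGraph.fromRel fun u v => ∃ e ∈ ({e₀} : Finset Γ.E),
        Γ.ends e = (u, v)).induce (↑(Γ.vertsOf {e₀}) : Set Γ.V)).Adj
        ⟨(Γ.ends e₀).1, ha⟩ ⟨(Γ.ends e₀).2, hb⟩ := by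
      refine ⟨hab, Or.inl ⟨e₀, Finset.mem_singleton_self _, ?_⟩⟩
      exact Prod.mk.eta
    haveI : Nonempty (↑(Γ.vertsOf {e₀}) : Set Γ.V) := ⟨⟨(Γ.ends e₀).1, ha⟩⟩
    refine ⟨fun x y => ?_⟩
    have hx := hmem x.1 (Finset.mem_coe.mp x.2)
    have hy := hmem y.1 (Finset.mem_coe.mp y.2)
    rcases hx with hx | hx <;> rcases hy with hy | hy
    · have : x = y := Subtype.ext (hx.trans hy.symm)
      rw [this]
    · have hx' : x = ⟨(Γ.ends e₀).1, ha⟩ := Subtype.ext hx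
      have hy' : y = ⟨(Γ.ends e₀).2, hb⟩ := Subtype.ext hy
      rw [hx', hy']; exact hadj.reachable
    · have hx' : x = ⟨(Γ.ends e₀).2, hb⟩ := Subtype.ext hx
      have hy' : y = ⟨(Γ.ends e₀).1, ha⟩ := Subtype.ext hy
      rw [hx', hy']; exact hadj.symm.reachable
    · have : x = y := Subtype.ext (hx.trans hy.symm)
      rw [this]
  have hSne : {r : ℝ | ∃ F : Finset Γ.E, Γ.IsFinSubgraph F ∧
      r = Γ.degBdry F / Γ.mes F}.Nonempty :=
    ⟨_, {e₀}, ⟨⟨e₀, Finset.mem_singleton_self _⟩, hconn⟩, rfl⟩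
  refine le_csInf hSne ?_
  rintro r ⟨F, ⟨hFne, _⟩, rfl⟩
  have hmes : 0 < Γ.mes F := Finset.sum_pos (fun e _ => Γ.len_pos e) hFne
  rw [le_div_iff₀ hmes]
  exact Γ.key_ineq h F hFne
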